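/- Let A ∈ M_m(ℂ) and B ∈ M_n(ℂ) be Hermitian. Then U_{A⊗B} = U_A ⊗ U_B if and only if one of: (a) A has a single eigenvalue a ≠ 0 and every eigenvalue b of B satisfies ab² - a(1-a)b + 1 = 0 (i.e., b = (a(1-a) ± √(a²(1-a)² - 4a))/(2a)); or (b) the symmetric condition with the roles of A and B exchanged. -/

import Mathlib

open Matrix Kronecker Complex

noncomputable def cayley {n : Type*} [Fintype n] [DecidableEq n]
    (A : Matrix n n ℂ) : Matrix n n ℂ :=
  (A - Complex.I • 1) * (A + Complex.I • 1)⁻¹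

lemma real_add_I_ne (a : ℝ) : (a : ℂ) + Complex.I ≠ 0 := by
  intro h; have := congrArg Complex.im h; simp at this

lemma scalar_iff (a b : ℝ) :
    ((a:ℂ) * b - Complex.I) * ((a:ℂ) * b + Complex.I)⁻¹ =
      ((a:ℂ) - Complex.I) * ((a:ℂ) + Complex.I)⁻¹ *
        (((b:ℂ) - Complex.I) * ((b:ℂ) + Complex.I)⁻¹) ↔
    a * b ^ 2 - a * (1 - a) * b + 1 = 0 := by
  have ha := real_add_I_ne a
  have hb := real_add_I_ne b
  have hab : ((a:ℂ) * b) + Complex.I ≠ 0 := by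
    have := real_add_I_ne (a * b); push_cast at this; exact this
  rw [← div_eq_mul_inv, ← div_eq_mul_inv, ← div_eq_mul_inv, div_mul_div_comm,
    div_eq_div_iff hab (mul_ne_zero ha hb)]
  constructor
  · intro h
    have : ((a * b ^ 2 - a * (1 - a) * b + 1 : ℝ) : ℂ) = 0 := by
      push_cast
      linear_combination (-(Complex.I)/2) * h + (-Complex.I^2 + ((a:ℂ)*b^2 + (a:ℂ)^2*b - (a:ℂ)*b + 1)) * Complex.I_sq
    exact_mod_cast this
  · intro h
    have h' : ((a * b ^ 2 - a * (1 - a) * b + 1 : ℝ) : ℂ) = 0 := by exact_mod_cast h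
    push_cast at h'
    linear_combination (2 * Complex.I) * h' + (-2*Complex.I) * Complex.I_sq

section MatrixLemmas

variable {k l : Type*} [Fintype k] [DecidableEq k] [Fintype l] [DecidableEq l]

lemma conj_cancel {U : Matrix k k ℂ} (hU : U ∈ Matrix.unitaryGroup k ℂ)
    (X : Matrix k k ℂ) : star U * (U * X * star U) * U = X := by
  have h2 : star U * U = 1 := (Matrix.mem_unitaryGroup_iff').mp hU
  calc star U * (U * X * star U) * U = (star U * U) * X * (star U * U) := by
        simp only [mul_assoc]
    _ = X := by rw [h2, one_mul, mul_one]

lemma conj_eq_iff {U : Matrix k k ℂ} (hU : U ∈ Matrix.unitaryGroup k ℂ)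
    (X Y : Matrix k k ℂ) : U * X * star U = U * Y * star U ↔ X = Y := by
  constructor
  · intro h
    have := congrArg (fun Z => star U * Z * U) h
    simpa only [conj_cancel hU] using this
  · rintro rfl; rfl

lemma cayley_unitary_conj {U : Matrix k k ℂ} (hU : U ∈ Matrix.unitaryGroup k ℂ)
    (M : Matrix k k ℂ) : cayley (U * M * star U) = U * cayley M * star U := by
  have h1 : U * star U = 1 := (Matrix.mem_unitaryGroup_iff).mp hU
  have h2 : star U * U = 1 := (Matrix.mem_unitaryGroup_iff').mp hU
  have hUinv : U⁻¹ = star U := Matrix.inv_eq_right_inv h1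
  have hsUinv : (star U)⁻¹ = U := Matrix.inv_eq_right_inv h2
  have key : ∀ c : ℂ, U * (M + c • 1) * star U = U * M * star U + c • 1 := by
    intro c
    rw [Matrix.mul_add, Matrix.add_mul, mul_smul_comm, mul_one, smul_mul_assoc, h1]
  have e1 : U * M * star U - Complex.I • 1 = U * (M - Complex.I • 1) * star U := by
    have := key (-Complex.I)
    rw [neg_smul, ← sub_eq_add_neg, ← sub_eq_add_neg] at this
    exact this.symm
  have e2 : U * M * star U + Complex.I • 1 = U * (M + Complex.I • 1) * star U :=
    (key Complex.I).symm
  rw [cayley, e1, e2, Matrix.mul_inv_rev, Matrix.mul_inv_rev, hUinv, hsUinv]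
  rw [cayley]
  have hcan : ∀ X : Matrix k k ℂ, star U * (U * X) = X := fun X => by
    rw [← mul_assoc, h2, one_mul]
  simp only [mul_assoc, hcan]

lemma cayley_diagonal (d : k → ℂ) (hd : ∀ i, d i + Complex.I ≠ 0) :
    cayley (Matrix.diagonal d) =
      Matrix.diagonal (fun i => (d i - Complex.I) * (d i + Complex.I)⁻¹) := by
  have h1 : (Complex.I • (1 : Matrix k k ℂ)) = Matrix.diagonal (fun _ => Complex.I) := by
    rw [← Matrix.diagonal_one, ← Matrix.diagonal_smul]
    rw [show (Complex.I • fun _ : k => (1:ℂ)) = fun _ => Complex.I from funext fun _ => by simp]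
  have hinv : (Matrix.diagonal d + Complex.I • 1)⁻¹ =
      Matrix.diagonal (fun i => (d i + Complex.I)⁻¹) := by
    rw [h1, Matrix.diagonal_add]
    apply Matrix.inv_eq_right_inv
    rw [Matrix.diagonal_mul_diagonal, ← Matrix.diagonal_one]
    rw [show (fun i => (d i + Complex.I) * (d i + Complex.I)⁻¹) = fun _ : k => (1:ℂ) from
      funext fun i => mul_inv_cancel₀ (hd i)]
  rw [cayley, hinv, h1, Matrix.diagonal_sub, Matrix.diagonal_mul_diagonal]

set_option linter.unusedSectionVars false in
lemma star_kronecker (A : Matrix k k ℂ) (B : Matrix l l ℂ) :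
    star (A ⊗ₖ B) = star A ⊗ₖ star B := by
  ext ⟨i, j⟩ ⟨p, q⟩
  simp [Matrix.star_eq_conjTranspose, Matrix.conjTranspose_apply, mul_comm]

lemma kron_unitary {U : Matrix k k ℂ} {V : Matrix l l ℂ}
    (hU : U ∈ Matrix.unitaryGroup k ℂ) (hV : V ∈ Matrix.unitaryGroup l ℂ) :
    U ⊗ₖ V ∈ Matrix.unitaryGroup (k × l) ℂ := by
  rw [Matrix.mem_unitaryGroup_iff]
  rw [star_kronecker, ← Matrix.mul_kronecker_mul,
    (Matrix.mem_unitaryGroup_iff).mp hU, (Matrix.mem_unitaryGroup_iff).mp hV,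
    Matrix.one_kronecker_one]

end MatrixLemmas

lemma combo {S T : Set ℝ} (hS : S.Nonempty) (hT : T.Nonempty) :
    (∀ a ∈ S, ∀ b ∈ T, a * b ^ 2 - a * (1 - a) * b + 1 = 0) ↔
      (∃ a : ℝ, a ≠ 0 ∧ S = {a} ∧ ∀ b ∈ T, a * b ^ 2 - a * (1 - a) * b + 1 = 0) ∨
      (∃ b : ℝ, b ≠ 0 ∧ T = {b} ∧ ∀ a ∈ S, b * a ^ 2 - b * (1 - b) * a + 1 = 0) := by
  constructor
  · intro h
    obtain ⟨a0, ha0⟩ := hS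
    obtain ⟨b0, hb0⟩ := hT
    have hSne : ∀ a ∈ S, a ≠ 0 := by
      intro a ha h0
      have := h a ha b0 hb0
      rw [h0] at this; norm_num at this
    have hTne : ∀ b ∈ T, b ≠ 0 := by
      intro b hb h0
      have := h a0 ha0 b hb
      rw [h0] at this; norm_num at this
    by_cases hsing : ∀ a ∈ S, a = a0
    · left
      refine ⟨a0, hSne a0 ha0, ?_, h a0 ha0⟩
      ext x
      exact ⟨fun hx => hsing x hx, fun hx => hx ▸ ha0⟩
    · right
      push_neg at hsing
      obtain ⟨a1, ha1, hne⟩ := hsing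
      have key : ∀ b ∈ T, b = 1 - a0 - a1 := by
        intro b hb
        have e1 := h a0 ha0 b hb
        have e2 := h a1 ha1 b hb
        have hfac : (a0 - a1) * b * (b + a0 + a1 - 1) = 0 := by linear_combination e1 - e2
        rcases mul_eq_zero.mp hfac with h' | h'
        · rcases mul_eq_zero.mp h' with h'' | h''
          · exact absurd (sub_eq_zero.mp h'').symm hne
          · exact absurd h'' (hTne b hb)
        · linarith
      have hb0v := key b0 hb0
      refine ⟨b0, hTne b0 hb0, ?_, ?_⟩
      · ext x
        exact ⟨fun hx => (key x hx).trans hb0v.symm, fun hx => hx ▸ hb0⟩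
      · intro a ha
        have := h a ha b0 hb0
        linear_combination this
  · rintro (⟨a, _, hSa, hT'⟩ | ⟨b, _, hTb, hS'⟩) <;> intro x hx y hy
    · rw [hSa] at hx
      rw [Set.mem_singleton_iff] at hx
      subst hx
      exact hT' y hy
    · rw [hTb] at hy
      rw [Set.mem_singleton_iff] at hy
      subst hy
      have := hS' x hx
      linear_combination this

theorem stmt_17 {m n : ℕ} (hm : 0 < m) (hn : 0 < n)
    (A : Matrix (Fin m) (Fin m) ℂ) (B : Matrix (Fin n) (Fin n) ℂ)
    (hA : A.IsHermitian) (hB : B.IsHermitian) :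
    cayley (A ⊗ₖ B) = cayley A ⊗ₖ cayley B ↔
      (∃ a : ℝ, a ≠ 0 ∧ spectrum ℝ A = {a} ∧
        ∀ b ∈ spectrum ℝ B, a * b ^ 2 - a * (1 - a) * b + 1 = 0) ∨
      (∃ b : ℝ, b ≠ 0 ∧ spectrum ℝ B = {b} ∧
        ∀ a ∈ spectrum ℝ A, b * a ^ 2 - b * (1 - b) * a + 1 = 0) := by
  haveI : Nonempty (Fin m) := ⟨⟨0, hm⟩⟩
  haveI : Nonempty (Fin n) := ⟨⟨0, hn⟩⟩
  have hU : (hA.eigenvectorUnitary : Matrix (Fin m) (Fin m) ℂ) ∈ Matrix.unitaryGroup (Fin m) ℂ :=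
    SetLike.coe_mem _
  have hV : (hB.eigenvectorUnitary : Matrix (Fin n) (Fin n) ℂ) ∈ Matrix.unitaryGroup (Fin n) ℂ :=
    SetLike.coe_mem _
  set U : Matrix (Fin m) (Fin m) ℂ := ↑(hA.eigenvectorUnitary) with hUdef
  set V : Matrix (Fin n) (Fin n) ℂ := ↑(hB.eigenvectorUnitary) with hVdef
  set μ : Fin m → ℝ := hA.eigenvalues with hμdef
  set ν : Fin n → ℝ := hB.eigenvalues with hνdef
  set dA : Matrix (Fin m) (Fin m) ℂ := Matrix.diagonal (fun i => ((μ i : ℝ) : ℂ)) with hdA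
  set dB : Matrix (Fin n) (Fin n) ℂ := Matrix.diagonal (fun j => ((ν j : ℝ) : ℂ)) with hdB
  have hAe : A = U * dA * star U := hA.spectral_theorem
  have hBe : B = V * dB * star V := hB.spectral_theorem
  have hW := kron_unitary hU hV
  have hABe : A ⊗ₖ B = (U ⊗ₖ V) * (dA ⊗ₖ dB) * star (U ⊗ₖ V) := by
    conv_lhs => rw [hAe, hBe]
    rw [star_kronecker, ← Matrix.mul_kronecker_mul, ← Matrix.mul_kronecker_mul]
  have hcAB : cayley (A ⊗ₖ B) = (U ⊗ₖ V) * cayley (dA ⊗ₖ dB) * star (U ⊗ₖ V) := by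
    rw [hABe, cayley_unitary_conj hW]
  have hcA : cayley A = U * cayley dA * star U := by rw [hAe, cayley_unitary_conj hU]
  have hcB : cayley B = V * cayley dB * star V := by rw [hBe, cayley_unitary_conj hV]
  have hkr : cayley A ⊗ₖ cayley B = (U ⊗ₖ V) * (cayley dA ⊗ₖ cayley dB) * star (U ⊗ₖ V) := by
    rw [hcA, hcB, star_kronecker, ← Matrix.mul_kronecker_mul, ← Matrix.mul_kronecker_mul]
  rw [hcAB, hkr, conj_eq_iff hW]
  have hdkron : dA ⊗ₖ dB =
      Matrix.diagonal (fun p : Fin m × Fin n => ((μ p.1 : ℂ) * (ν p.2 : ℂ))) := by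
    rw [hdA, hdB, Matrix.diagonal_kronecker_diagonal]
  rw [hdkron, hdA, hdB,
    cayley_diagonal _ (fun p : Fin m × Fin n => by
      have := real_add_I_ne (μ p.1 * ν p.2); push_cast at this; exact this),
    cayley_diagonal _ (fun i => real_add_I_ne (μ i)),
    cayley_diagonal _ (fun j => real_add_I_ne (ν j)),
    Matrix.diagonal_kronecker_diagonal, Matrix.diagonal_injective.eq_iff, funext_iff]
  rw [hA.spectrum_real_eq_range_eigenvalues, hB.spectrum_real_eq_range_eigenvalues, ← hμdef, ← hνdef,
    ← combo (Set.range_nonempty μ) (Set.range_nonempty ν)]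
  simp only [Set.forall_mem_range]
  constructor
  · intro h i j
    exact (scalar_iff _ _).mp (h (i, j))
  · intro h x
    exact (scalar_iff _ _).mpr (h x.1 x.2)
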